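/- (Finiteness and strict monotonicity of c) For every h_tot > 0 and positive integer N_T, the function τ ↦ c(τ) = ∫_ℝ e^{−u²/2}·(2·e^{(h_tot·τ/N_T)·|u|} − 1 − 2·(h_tot·τ/N_T)·|u|)^{N_T} du is finite for all τ ≥ 0, satisfies c(0) = √(2π), and is strictly increasing on [0, ∞). -/

import Mathlib

open Real MeasureTheory


lemma aux_F_one_le {t : ℝ} (ht : 0 ≤ t) : 1 ≤ 2 * Real.exp t - 1 - 2 * t := by
  nlinarith [Real.add_one_le_exp t]

lemma aux_F_lt {s t : ℝ} (hs : 0 ≤ s) (hst : s < t) :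
    2 * Real.exp s - 1 - 2 * s < 2 * Real.exp t - 1 - 2 * t := by
  have h1 : Real.exp t = Real.exp s * Real.exp (t - s) := by
    rw [← Real.exp_add]; ring_nf
  have h2 : t - s + 1 < Real.exp (t - s) := Real.add_one_lt_exp (by linarith)
  have h3 : 1 ≤ Real.exp s := Real.one_le_exp hs
  nlinarith

lemma aux_F_le {s t : ℝ} (hs : 0 ≤ s) (hst : s ≤ t) :
    2 * Real.exp s - 1 - 2 * s ≤ 2 * Real.exp t - 1 - 2 * t := by
  rcases eq_or_lt_of_le hst with h | h
  · rw [h]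
  · exact (aux_F_lt hs h).le

lemma gaussInt : Integrable (fun u : ℝ => Real.exp (-u ^ 2 / 2)) := by
  have h := integrable_exp_neg_mul_sq (show (0:ℝ) < 1/2 by norm_num)
  refine h.congr (Filter.Eventually.of_forall fun x => ?_)
  exact congrArg Real.exp (by ring)

lemma shiftInt (c : ℝ) : Integrable (fun u : ℝ => Real.exp (-u ^ 2 / 2) * Real.exp (c * u)) := by
  have h := (gaussInt.comp_sub_right c).const_mul (Real.exp (c ^ 2 / 2))
  refine h.congr (Filter.Eventually.of_forall fun x => ?_)
  simp only
  rw [← Real.exp_add, ← Real.exp_add]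
  exact congrArg Real.exp (by ring)

lemma mainInt {b : ℝ} (hb : 0 ≤ b) (NT : ℕ) :
    Integrable (fun u : ℝ => Real.exp (-u ^ 2 / 2) *
      (2 * Real.exp (b * |u|) - 1 - 2 * (b * |u|)) ^ NT) := by
  have hdom : Integrable (fun u : ℝ => (2:ℝ)^NT *
      (Real.exp (-u^2/2) * Real.exp ((NT*b) * u) + Real.exp (-u^2/2) * Real.exp ((-(NT*b)) * u))) :=
    ((shiftInt _).add (shiftInt _)).const_mul _
  refine hdom.mono' ?_ (Filter.Eventually.of_forall fun u => ?_)
  · apply Continuous.aestronglyMeasurable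
    fun_prop
  · set t := b * |u| with ht
    have ht0 : 0 ≤ t := mul_nonneg hb (abs_nonneg u)
    have hF1 : 1 ≤ 2 * Real.exp t - 1 - 2 * t := aux_F_one_le ht0
    have habs : |Real.exp (-u ^ 2 / 2) * (2 * Real.exp t - 1 - 2 * t) ^ NT|
        = Real.exp (-u ^ 2 / 2) * (2 * Real.exp t - 1 - 2 * t) ^ NT := by
      apply abs_of_nonneg
      positivity
    rw [Real.norm_eq_abs, habs]
    have step1 : (2 * Real.exp t - 1 - 2 * t) ^ NT ≤ (2 * Real.exp t) ^ NT := by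
      apply pow_le_pow_left₀ (by linarith) (by linarith [Real.exp_pos t])
    have step2 : (2 * Real.exp t) ^ NT = 2 ^ NT * Real.exp ((NT : ℝ) * t) := by
      rw [mul_pow, Real.exp_nat_mul]
    have step3 : Real.exp ((NT : ℝ) * t) ≤ Real.exp ((NT*b) * u) + Real.exp ((-(NT*b)) * u) := by
      have hnb : 0 ≤ (NT : ℝ) * b := mul_nonneg (Nat.cast_nonneg _) hb
      rcases abs_cases u with ⟨h1, _⟩ | ⟨h1, _⟩
      · have : (NT : ℝ) * t = (NT * b) * u := by rw [ht, h1]; ring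
        rw [this]
        nlinarith [Real.exp_pos ((-(NT*b)) * u)]
      · have : (NT : ℝ) * t = (-(NT * b)) * u := by rw [ht, h1]; ring
        rw [this]
        nlinarith [Real.exp_pos ((NT*b) * u)]
    have hexp := (Real.exp_pos (-u^2/2)).le
    calc Real.exp (-u ^ 2 / 2) * (2 * Real.exp t - 1 - 2 * t) ^ NT
        ≤ Real.exp (-u ^ 2 / 2) * (2 ^ NT * Real.exp ((NT : ℝ) * t)) := by
          rw [← step2]; exact mul_le_mul_of_nonneg_left step1 hexp
      _ ≤ 2^NT * (Real.exp (-u^2/2) * Real.exp ((NT*b) * u)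
            + Real.exp (-u^2/2) * Real.exp ((-(NT*b)) * u)) := by
          rw [← mul_add]
          nlinarith [mul_le_mul_of_nonneg_left step3 hexp, pow_pos (show (0:ℝ)<2 by norm_num) NT]

lemma ptwise_le {a1 a2 : ℝ} (h1 : 0 ≤ a1) (h12 : a1 ≤ a2) (NT : ℕ) (u : ℝ) :
    Real.exp (-u^2/2) * (2*Real.exp (a1*|u|) - 1 - 2*(a1*|u|))^NT ≤
    Real.exp (-u^2/2) * (2*Real.exp (a2*|u|) - 1 - 2*(a2*|u|))^NT := by
  have ht0 : 0 ≤ a1 * |u| := mul_nonneg h1 (abs_nonneg u)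
  apply mul_le_mul_of_nonneg_left _ (Real.exp_pos _).le
  apply pow_le_pow_left₀ (by linarith [aux_F_one_le ht0])
  exact aux_F_le ht0 (mul_le_mul_of_nonneg_right h12 (abs_nonneg u))

lemma ptwise_lt {a1 a2 : ℝ} (h1 : 0 ≤ a1) (h12 : a1 < a2) {NT : ℕ} (hNT : 0 < NT) {u : ℝ}
    (hu : u ≠ 0) :
    Real.exp (-u^2/2) * (2*Real.exp (a1*|u|) - 1 - 2*(a1*|u|))^NT <
    Real.exp (-u^2/2) * (2*Real.exp (a2*|u|) - 1 - 2*(a2*|u|))^NT := by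
  have hu0 : 0 < |u| := abs_pos.mpr hu
  have ht0 : 0 ≤ a1 * |u| := mul_nonneg h1 hu0.le
  have hlt : a1 * |u| < a2 * |u| := mul_lt_mul_of_pos_right h12 hu0
  apply mul_lt_mul_of_pos_left _ (Real.exp_pos _)
  apply pow_lt_pow_left₀ (aux_F_lt ht0 hlt) (by linarith [aux_F_one_le ht0]) hNT.ne'


/-- (Finiteness and strict monotonicity of `c`) For every `h_tot > 0` and positive integer
`N_T`, the function
`c(τ) = ∫ e^{−u²/2}·(2·e^{(h_tot·τ/N_T)·|u|} − 1 − 2·(h_tot·τ/N_T)·|u|)^{N_T} du`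
is finite (the integrand is integrable) for all `τ ≥ 0`, satisfies `c(0) = √(2π)`,
and is strictly increasing on `[0, ∞)`. -/
theorem stmt17 (h_tot : ℝ) (hh : 0 < h_tot) (NT : ℕ) (hNT : 0 < NT) :
    (∀ τ : ℝ, 0 ≤ τ → MeasureTheory.Integrable (fun u : ℝ =>
        Real.exp (-u ^ 2 / 2) *
          (2 * Real.exp (h_tot * τ / NT * |u|) - 1 - 2 * (h_tot * τ / NT * |u|)) ^ NT)) ∧
    (∫ u : ℝ, Real.exp (-u ^ 2 / 2) *
        (2 * Real.exp (h_tot * 0 / NT * |u|) - 1 - 2 * (h_tot * 0 / NT * |u|)) ^ NT) =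
      Real.sqrt (2 * Real.pi) ∧
    StrictMonoOn (fun τ : ℝ => ∫ u : ℝ, Real.exp (-u ^ 2 / 2) *
        (2 * Real.exp (h_tot * τ / NT * |u|) - 1 - 2 * (h_tot * τ / NT * |u|)) ^ NT)
      (Set.Ici 0) := by
  have hNpos : (0:ℝ) < (NT : ℝ) := Nat.cast_pos.mpr hNT
  have hint : ∀ τ : ℝ, 0 ≤ τ → MeasureTheory.Integrable (fun u : ℝ =>
      Real.exp (-u ^ 2 / 2) *
        (2 * Real.exp (h_tot * τ / NT * |u|) - 1 - 2 * (h_tot * τ / NT * |u|)) ^ NT) := by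
    intro τ hτ
    exact mainInt (div_nonneg (mul_nonneg hh.le hτ) hNpos.le) NT
  refine ⟨hint, ?_, ?_⟩
  · have : ∀ u : ℝ, Real.exp (-u ^ 2 / 2) *
        (2 * Real.exp (h_tot * 0 / NT * |u|) - 1 - 2 * (h_tot * 0 / NT * |u|)) ^ NT
        = Real.exp (-(1/2) * u ^ 2) := by
      intro u
      rw [mul_zero, zero_div, zero_mul, Real.exp_zero]
      norm_num
      ring_nf
    simp_rw [this]
    rw [integral_gaussian]
    congr 1
    field_simp
  · intro τ1 hτ1 τ2 hτ2 h12
    simp only [Set.mem_Ici] at hτ1 hτ2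
    set a1 := h_tot * τ1 / NT with ha1def
    set a2 := h_tot * τ2 / NT with ha2def
    have ha1 : 0 ≤ a1 := div_nonneg (mul_nonneg hh.le hτ1) hNpos.le
    have ha12 : a1 < a2 := by
      rw [ha1def, ha2def]
      gcongr <;> first | exact hh.le | exact h12 | positivity
    have hi1 := hint τ1 hτ1
    have hi2 := hint τ2 hτ2
    have hle : ∀ u : ℝ,
        Real.exp (-u^2/2) * (2*Real.exp (a1*|u|) - 1 - 2*(a1*|u|))^NT ≤
        Real.exp (-u^2/2) * (2*Real.exp (a2*|u|) - 1 - 2*(a2*|u|))^NT :=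
      fun u => ptwise_le ha1 ha12.le NT u
    set g : ℝ → ℝ := fun u =>
      Real.exp (-u^2/2) * (2*Real.exp (a2*|u|) - 1 - 2*(a2*|u|))^NT -
      Real.exp (-u^2/2) * (2*Real.exp (a1*|u|) - 1 - 2*(a1*|u|))^NT with hg
    have hgint : MeasureTheory.Integrable g := hi2.sub hi1
    have hsupp : Set.Ioi (0:ℝ) ⊆ Function.support g := by
      intro u hu
      have hu0 : u ≠ 0 := ne_of_gt hu
      have := ptwise_lt ha1 ha12 hNT hu0
      simp only [hg, Function.mem_support]
      intro hc
      rw [sub_eq_zero] at hc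
      exact absurd hc (ne_of_gt this)
    have hpos : 0 < ∫ u, g u := by
      rw [MeasureTheory.integral_pos_iff_support_of_nonneg_ae
        (Filter.Eventually.of_forall fun u => sub_nonneg.mpr (hle u)) hgint]
      calc (0 : ENNReal) < MeasureTheory.volume (Set.Ioi (0:ℝ)) := by
            simp [Real.volume_Ioi]
        _ ≤ MeasureTheory.volume (Function.support g) :=
            MeasureTheory.measure_mono hsupp
    rw [hg] at hpos
    rw [MeasureTheory.integral_sub hi2 hi1] at hpos
    simp only
    linarith
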